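/- The polynomial r_{k,i}(p) = i + Σ_{j=1}^{i-1}(i+j)k^{j-1}p^j − i k^i p^i satisfies r_{k,i}(0) = i > 0 and r_{k,i}(1) < 0 for all k ≥ 2, i ≥ 2; hence it has a root in (0,1). -/

import Mathlib

open Finset Set

/-- `r_{k,i}(p) = i + Σ_{j=1}^{i-1}(i+j)k^{j-1}p^j − i k^i p^i`. -/
noncomputable def rPoly (k i : ℕ) (p : ℝ) : ℝ :=
  i + (∑ j ∈ Finset.Icc 1 (i - 1), ((i : ℝ) + j) * k ^ (j - 1) * p ^ j)
    - i * (k : ℝ) ^ i * p ^ i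

private lemma myGeomLt (k n : ℕ) (hk : 2 ≤ k) :
    ∑ m ∈ Finset.range n, k ^ m < k ^ n := by
  induction n with
  | zero => simp
  | succ n ih =>
    rw [Finset.sum_range_succ, pow_succ]
    calc ∑ m ∈ Finset.range n, k ^ m + k ^ n < k ^ n + k ^ n := by omega
    _ = k ^ n * 2 := by ring
    _ ≤ k ^ n * k := by
        exact Nat.mul_le_mul_left _ hk

private lemma keyNat (k i : ℕ) (hk : 2 ≤ k) (hi : 2 ≤ i) :
    i + ∑ j ∈ Finset.Icc 1 (i - 1), (i + j) * k ^ (j - 1) < i * k ^ i := by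
  set S := ∑ m ∈ Finset.range (i - 1), k ^ m with hS
  have hsum : ∑ j ∈ Finset.Icc 1 (i - 1), (i + j) * k ^ (j - 1)
      < ∑ j ∈ Finset.Icc 1 (i - 1), 2 * i * k ^ (j - 1) := by
    apply Finset.sum_lt_sum_of_nonempty
    · exact Finset.nonempty_Icc.mpr (by omega)
    · intro j hj
      have hj' := Finset.mem_Icc.mp hj
      have : i + j < 2 * i := by omega
      have hkpos : 0 < k ^ (j - 1) := Nat.pow_pos (by omega)
      exact Nat.mul_lt_mul_of_lt_of_le this (le_refl _) hkpos
  have hre : ∑ j ∈ Finset.Icc 1 (i - 1), 2 * i * k ^ (j - 1) = 2 * i * S := by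
    have hIcc : Finset.Icc 1 (i - 1) = Finset.Ico 1 i := by
      rw [← Finset.Ico_add_one_right_eq_Icc]; congr 1; omega
    rw [hS, Finset.mul_sum, hIcc, Finset.sum_Ico_eq_sum_range]
    apply Finset.sum_congr (by congr 1)
    intro m _
    simp
  have hSlt : S < k ^ (i - 1) := myGeomLt k (i - 1) hk
  have hpow : 2 * k ^ (i - 1) ≤ k ^ i := by
    have : k ^ i = k ^ (i - 1) * k := by
      rw [← pow_succ]; congr 1; omega
    rw [this]
    calc 2 * k ^ (i - 1) = k ^ (i - 1) * 2 := by ring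
    _ ≤ k ^ (i - 1) * k := Nat.mul_le_mul_left _ hk
  have h2i : 2 * i * (S + 1) ≤ i * k ^ i := by
    calc 2 * i * (S + 1) ≤ 2 * i * k ^ (i - 1) := Nat.mul_le_mul_left _ (by omega)
    _ = i * (2 * k ^ (i - 1)) := by ring
    _ ≤ i * k ^ i := Nat.mul_le_mul_left _ hpow
  calc i + ∑ j ∈ Finset.Icc 1 (i - 1), (i + j) * k ^ (j - 1)
      < i + 2 * i * S := Nat.add_lt_add_left (hre ▸ hsum) i
    _ < 2 * i * (S + 1) := by nlinarith
    _ ≤ i * k ^ i := h2i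

private lemma rPoly_one_neg (k i : ℕ) (hk : 2 ≤ k) (hi : 2 ≤ i) :
    rPoly k i 1 < 0 := by
  have h := keyNat k i hk hi
  have hcast : ((i : ℝ) + ∑ j ∈ Finset.Icc 1 (i - 1), ((i : ℝ) + j) * k ^ (j - 1))
      < (i : ℝ) * k ^ i := by
    have := (Nat.cast_lt (α := ℝ)).mpr h
    push_cast at this
    convert this using 2
  simp only [rPoly, one_pow, mul_one]
  linarith

private lemma rPoly_zero (k i : ℕ) (hi : 2 ≤ i) : rPoly k i 0 = i := by
  simp only [rPoly]
  rw [Finset.sum_eq_zero, zero_pow (by omega)]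
  · ring
  · intro j hj
    have := (Finset.mem_Icc.mp hj).1
    rw [zero_pow (by omega), mul_zero]

/-- `r_{k,i}(0) = i > 0` and `r_{k,i}(1) < 0` for all `k ≥ 2`, `i ≥ 2`; hence
`r_{k,i}` has a root in `(0,1)`. -/
theorem rPoly_root_exists (k i : ℕ) (hk : 2 ≤ k) (hi : 2 ≤ i) :
    rPoly k i 0 = i ∧ (0:ℝ) < i ∧ rPoly k i 1 < 0 ∧
    ∃ p ∈ Ioo (0:ℝ) 1, rPoly k i p = 0 := by
  have h0 : rPoly k i 0 = i := rPoly_zero k i hi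
  have hipos : (0:ℝ) < i := by
    exact_mod_cast Nat.pos_of_ne_zero (by omega)
  have h1 : rPoly k i 1 < 0 := rPoly_one_neg k i hk hi
  refine ⟨h0, hipos, h1, ?_⟩
  have hcont : ContinuousOn (rPoly k i) (Icc (0:ℝ) 1) := by
    apply Continuous.continuousOn
    unfold rPoly
    fun_prop
  have hsub := intermediate_value_Ioo' (le_of_lt one_pos) hcont
  have h0mem : (0:ℝ) ∈ Ioo (rPoly k i 1) (rPoly k i 0) := by
    constructor
    · exact h1
    · rw [h0]; exact hipos
  obtain ⟨p, hp, hpe⟩ := hsub h0mem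
  exact ⟨p, hp, hpe⟩
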